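/- There exist p ≥ 1 and x, y ∈ [0,1]^p with x + y ≠ 0 such that Δ_SDL(x,y) ≠ Δ_DML1(x,y), and there exist p ≥ 1 and x, y ∈ [0,1]^p with x + y ≠ 0 such that Δ_DML1(x,y) ≠ Δ_DML2(x,y). (For instance, with p = 1, x = 1/2, y = 1/2 gives Δ_SDL = 1/2 while Δ_DML1 = 0; and x = 1/2, y = 1/4 gives Δ_DML1 = 1/3 while Δ_DML2 = 1/2.) -/

import Mathlib

open Finset

/-- The L¹ norm of a vector. -/
noncomputable def l1 {p : ℕ} (z : Fin p → ℝ) : ℝ := ∑ i, |z i|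

/-- The first Dice semimetric loss. -/
noncomputable def DML1 {p : ℕ} (x y : Fin p → ℝ) : ℝ :=
  1 - (l1 (x + y) - l1 (x - y)) / l1 (x + y)

/-- The second Dice semimetric loss. -/
noncomputable def DML2 {p : ℕ} (x y : Fin p → ℝ) : ℝ :=
  1 - 2 * l1 (x * y) / (2 * l1 (x * y) + l1 (x - y))

/-- The soft Dice loss. -/
noncomputable def SDL {p : ℕ} (x y : Fin p → ℝ) : ℝ :=
  1 - 2 * (∑ i, x i * y i) / (l1 x + l1 y)

/-- Theorem 2 (second half): on soft labels the soft Dice loss can differ from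
the first Dice semimetric loss, and the two Dice semimetric losses can differ. -/
theorem sdl_dml_differ_on_soft_labels :
    (∃ p : ℕ, 1 ≤ p ∧ ∃ x y : Fin p → ℝ,
      (∀ i, 0 ≤ x i ∧ x i ≤ 1) ∧ (∀ i, 0 ≤ y i ∧ y i ≤ 1) ∧ x + y ≠ 0 ∧
      SDL x y ≠ DML1 x y) ∧
    (∃ p : ℕ, 1 ≤ p ∧ ∃ x y : Fin p → ℝ,
      (∀ i, 0 ≤ x i ∧ x i ≤ 1) ∧ (∀ i, 0 ≤ y i ∧ y i ≤ 1) ∧ x + y ≠ 0 ∧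
      DML1 x y ≠ DML2 x y) := by
  constructor
  · refine ⟨1, le_refl 1, fun _ => 1/2, fun _ => 1/2, fun i => by norm_num,
      fun i => by norm_num, ?_, ?_⟩
    · intro h
      have := congrFun h 0
      simp [Pi.add_apply] at this
    · simp [SDL, DML1, l1, Fin.sum_univ_one, Pi.add_apply, Pi.sub_apply, abs_of_nonneg]
      norm_num
  · refine ⟨1, le_refl 1, fun _ => 1/2, fun _ => 1/4, fun i => by norm_num,
      fun i => by norm_num, ?_, ?_⟩
    · intro h
      have := congrFun h 0
      simp [Pi.add_apply] at this
      norm_num at this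
    · simp [DML1, DML2, l1, Fin.sum_univ_one, Pi.add_apply, Pi.sub_apply, Pi.mul_apply]
      rw [show |(2:ℝ)⁻¹ + 4⁻¹| = 3/4 by rw [abs_of_nonneg] <;> norm_num,
        show |(2:ℝ)⁻¹ - 4⁻¹| = 1/4 by rw [abs_of_nonneg] <;> norm_num]
      norm_num
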